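/- Let τ = (1+√5)/2 and let ℤ[τ] = {p + qτ : p, q ∈ ℤ} ⊆ ℝ. If a, b, c ∈ ℤ[τ] satisfy a ≤ 0, b ≤ 0, c ≤ 0 and the symmetric real matrix [[2, a, b, c], [a, 2, -1, 0], [b, -1, 2, -τ], [c, 0, -τ, 2]] has determinant 0, then a = 0, b = 1 - τ, and c = 0. In other words, this bordered matrix with (a, b, c) = (0, τ', 0), τ' = 1 - τ, is the unique affine extension of the Cartan matrix of H₃ satisfying the conditions: diagonal entries 2, symmetry, off-diagonal entries nonpositive elements of ℤ[τ], and determinant 0. -/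

import Mathlib

set_option maxHeartbeats 2000000

noncomputable def tau : ℝ := (1 + Real.sqrt 5) / 2

/-- The ring of integers ℤ[τ] of ℚ(√5), as a subset of ℝ. -/
def Ztau : Set ℝ := {x : ℝ | ∃ p q : ℤ, x = (p : ℝ) + (q : ℝ) * tau}

private lemma int_comb_zero (x : ℝ) (hx : Irrational x) (u v : ℤ)
    (h : (u : ℝ) + (v : ℝ) * x = 0) : u = 0 ∧ v = 0 := by
  rcases eq_or_ne v 0 with rfl | hv
  · refine ⟨?_, rfl⟩
    have : (u : ℝ) = 0 := by simpa using h
    exact_mod_cast this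
  · exfalso
    apply hx
    refine ⟨(-u : ℚ) / (v : ℚ), ?_⟩
    have hv' : (v : ℝ) ≠ 0 := by exact_mod_cast hv
    push_cast
    field_simp
    linarith

private lemma quad_bounds (t a b c : ℝ) (ht : t ^ 2 = t + 1) (htlt : t < 2)
    (hE : (3 - t) * a ^ 2 + 4 * b ^ 2 + 3 * c ^ 2 + 4 * a * b + 2 * t * a * c
        + 4 * t * b * c = 8 - 4 * t) :
    a ^ 2 ≤ 4 ∧ b ^ 2 ≤ 4 ∧ c ^ 2 ≤ 4 := by
  have h2t : (0 : ℝ) < 2 - t := by linarith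
  have h3t : (0 : ℝ) < 3 - t := by linarith
  have hSOS1 : (2 - t) * (a ^ 2 + c ^ 2) + (2 * b + a + t * c) ^ 2 = 8 - 4 * t := by
    linear_combination hE + c ^ 2 * ht
  have hSOS2 : ((3 - t) * a + 2 * b + t * c) ^ 2 + (3 - t) * (2 - t) * b ^ 2
      + (2 - t) * (t * b + 2 * c) ^ 2 = (3 - t) * (8 - 4 * t) := by
    linear_combination (3 - t) * hE + (c ^ 2 + 2 * b ^ 2 - b ^ 2 * t) * ht
  refine ⟨?_, ?_, ?_⟩
  · nlinarith [sq_nonneg (2 * b + a + t * c), sq_nonneg c, sq_nonneg a]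
  · nlinarith [sq_nonneg ((3 - t) * a + 2 * b + t * c),
      mul_nonneg h2t.le (sq_nonneg (t * b + 2 * c)), mul_pos h3t h2t]
  · nlinarith [sq_nonneg (2 * b + a + t * c), sq_nonneg c, sq_nonneg a]

private lemma candidates (t : ℝ) (ht1 : 1.6 < t) (ht2 : t < 1.62) (p q : ℤ)
    (h0 : (p : ℝ) + q * t ≤ 0) (h2 : -2 ≤ (p : ℝ) + q * t)
    (h2' : -2 ≤ (p : ℝ) + q * (1 - t)) (h2'' : (p : ℝ) + q * (1 - t) ≤ 2) :
    p = 0 ∧ q = 0 ∨ p = -1 ∧ q = 0 ∨ p = -2 ∧ q = 0 ∨ p = 0 ∧ q = -1 ∨ p = 1 ∧ q = -1 := by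
  have hql : (-2 : ℝ) < (q : ℤ) := by nlinarith
  have hqu : ((q : ℤ) : ℝ) < 1 := by nlinarith
  have hql' : (-2 : ℤ) < q := by exact_mod_cast hql
  have hqu' : (q : ℤ) < 1 := by exact_mod_cast hqu
  interval_cases q
  · -- q = -1
    have hpl : (-1 : ℝ) < (p : ℤ) := by push_cast at h2 ⊢; linarith
    have hpu : ((p : ℤ) : ℝ) < 2 := by push_cast at h0 ⊢; linarith
    have hpl' : (-1 : ℤ) < p := by exact_mod_cast hpl
    have hpu' : (p : ℤ) < 2 := by exact_mod_cast hpu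
    interval_cases p <;> tauto
  · -- q = 0
    have hpl : (-3 : ℝ) < (p : ℤ) := by push_cast at h2 ⊢; linarith
    have hpu : ((p : ℤ) : ℝ) < 1 := by push_cast at h0 ⊢; linarith
    have hpl' : (-3 : ℤ) < p := by exact_mod_cast hpl
    have hpu' : (p : ℤ) < 1 := by exact_mod_cast hpu
    interval_cases p <;> tauto

/-- Uniqueness of the affine extension of the Cartan matrix of H₃. -/
theorem affine_extension_H3_unique (a b c : ℝ)
    (ha : a ∈ Ztau) (hb : b ∈ Ztau) (hc : c ∈ Ztau)
    (ha0 : a ≤ 0) (hb0 : b ≤ 0) (hc0 : c ≤ 0)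
    (hdet : Matrix.det !![(2 : ℝ), a, b, c;
                          a, 2, -1, 0;
                          b, -1, 2, -tau;
                          c, 0, -tau, 2] = 0) :
    a = 0 ∧ b = 1 - tau ∧ c = 0 := by
  obtain ⟨p1, q1, rfl⟩ := ha
  obtain ⟨p2, q2, rfl⟩ := hb
  obtain ⟨p3, q3, rfl⟩ := hc
  have h5 : Real.sqrt 5 ^ 2 = 5 := Real.sq_sqrt (by norm_num)
  have h5l : (2.2 : ℝ) < Real.sqrt 5 := by nlinarith [Real.sqrt_nonneg 5]
  have h5u : Real.sqrt 5 < 2.24 := by nlinarith [Real.sqrt_nonneg 5]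
  have ht : tau ^ 2 = tau + 1 := by rw [tau]; linear_combination h5 / 4
  have ht1 : (1.6 : ℝ) < tau := by rw [tau]; linarith
  have ht2 : tau < 1.62 := by rw [tau]; linarith
  have h5irr : Irrational (Real.sqrt 5) := by
    have := (Nat.prime_iff.mp (by norm_num : Nat.Prime 5)).1
    simpa using (Nat.Prime.irrational_sqrt (by norm_num : Nat.Prime 5))
  have hirr : Irrational tau := by
    rintro ⟨r, hr⟩
    apply h5irr
    refine ⟨2 * r - 1, ?_⟩
    rw [tau] at hr
    push_cast
    linarith [hr]
  -- expand determinant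
  simp [Matrix.det_succ_row_zero, Fin.sum_univ_succ, Fin.succAbove] at hdet
  -- integer relations
  have hUV : ((-8 + 3*q3^2 + 3*p3^2 + 4*q2*q3 + 4*q2*p3 + 4*q2^2 + 4*p2*q3 + 4*p2^2
      + 2*q1*q3 + 2*q1*p3 + 4*q1*q2 + 2*q1^2 + 2*p1*q3 + 4*p1*p2 - 2*p1*q1 + 3*p1^2 : ℤ) : ℝ)
      + ((4 + 3*q3^2 + 6*p3*q3 + 8*q2*q3 + 4*q2*p3 + 4*q2^2 + 4*p2*q3 + 4*p2*p3 + 8*p2*q2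
      + 4*q1*q3 + 2*q1*p3 + 4*q1*q2 + 4*q1*p2 + q1^2 + 2*p1*q3 + 2*p1*p3 + 4*p1*q2
      + 4*p1*q1 - p1^2 : ℤ) : ℝ) * tau = 0 := by
    push_cast
    linear_combination (-1 : ℝ) * hdet +
      (((p1:ℝ) + q1*tau)^2 - 4
        - (3*(q3:ℝ)^2 + 4*q2*q3 + 4*q2*p3 + 4*q2^2 + 4*p2*q3 + 2*q1*q3 + 2*q1*p3
          + 4*q1*q2 + 2*q1^2 + 2*p1*q3 - 2*p1*q1
          + tau * (4*(q2:ℝ)*q3 + 2*q1*q3 - q1^2))) * ht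
  obtain ⟨hUz, hVz⟩ := int_comb_zero tau hirr _ _ hUV
  -- real forms of the integer relations
  have hU0 : (-8 + 3*(q3:ℝ)^2 + 3*(p3:ℝ)^2 + 4*q2*q3 + 4*q2*p3 + 4*(q2:ℝ)^2 + 4*p2*q3
      + 4*(p2:ℝ)^2 + 2*q1*q3 + 2*q1*p3 + 4*q1*q2 + 2*(q1:ℝ)^2 + 2*p1*q3 + 4*p1*p2
      - 2*p1*q1 + 3*(p1:ℝ)^2 : ℝ) = 0 := by exact_mod_cast hUz
  have hV0 : (4 + 3*(q3:ℝ)^2 + 6*p3*q3 + 8*q2*q3 + 4*q2*p3 + 4*(q2:ℝ)^2 + 4*p2*q3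
      + 4*p2*p3 + 8*p2*q2 + 4*q1*q3 + 2*q1*p3 + 4*q1*q2 + 4*q1*p2 + (q1:ℝ)^2 + 2*p1*q3
      + 2*p1*p3 + 4*p1*q2 + 4*p1*q1 - (p1:ℝ)^2 : ℝ) = 0 := by exact_mod_cast hVz
  -- the quadratic relation for (a,b,c) with t = tau
  have hE : (3 - tau) * ((p1:ℝ) + q1*tau) ^ 2 + 4 * ((p2:ℝ) + q2*tau) ^ 2
      + 3 * ((p3:ℝ) + q3*tau) ^ 2 + 4 * ((p1:ℝ) + q1*tau) * ((p2:ℝ) + q2*tau)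
      + 2 * tau * ((p1:ℝ) + q1*tau) * ((p3:ℝ) + q3*tau)
      + 4 * tau * ((p2:ℝ) + q2*tau) * ((p3:ℝ) + q3*tau) = 8 - 4 * tau := by
    linear_combination hU0 + tau * hV0 +
      (3*(q3:ℝ)^2 + 4*q2*q3 + 4*q2*p3 + 4*q2^2 + 4*p2*q3 + 2*q1*q3 + 2*q1*p3
        + 4*q1*q2 + 2*q1^2 + 2*p1*q3 - 2*p1*q1
        + tau * (4*(q2:ℝ)*q3 + 2*q1*q3 - q1^2)) * ht
  -- the conjugate relation with s = 1 - tau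
  have hs : (1 - tau) ^ 2 = (1 - tau) + 1 := by linear_combination ht
  have hE' : (3 - (1-tau)) * ((p1:ℝ) + q1*(1-tau)) ^ 2 + 4 * ((p2:ℝ) + q2*(1-tau)) ^ 2
      + 3 * ((p3:ℝ) + q3*(1-tau)) ^ 2 + 4 * ((p1:ℝ) + q1*(1-tau)) * ((p2:ℝ) + q2*(1-tau))
      + 2 * (1-tau) * ((p1:ℝ) + q1*(1-tau)) * ((p3:ℝ) + q3*(1-tau))
      + 4 * (1-tau) * ((p2:ℝ) + q2*(1-tau)) * ((p3:ℝ) + q3*(1-tau)) = 8 - 4 * (1-tau) := by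
    linear_combination hU0 + (1-tau) * hV0 +
      (3*(q3:ℝ)^2 + 4*q2*q3 + 4*q2*p3 + 4*q2^2 + 4*p2*q3 + 2*q1*q3 + 2*q1*p3
        + 4*q1*q2 + 2*q1^2 + 2*p1*q3 - 2*p1*q1
        + (1-tau) * (4*(q2:ℝ)*q3 + 2*q1*q3 - q1^2)) * hs
  obtain ⟨hA, hB, hC⟩ := quad_bounds tau _ _ _ ht (by linarith) hE
  obtain ⟨hA', hB', hC'⟩ := quad_bounds (1-tau) _ _ _ hs (by linarith) hE'
  -- interval bounds: x ∈ [-2,0], conj x ∈ [-2,2]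
  have bd : ∀ x : ℝ, x ^ 2 ≤ 4 → -2 ≤ x ∧ x ≤ 2 := by
    intro x hx
    constructor <;> nlinarith [sq_nonneg (x + 2), sq_nonneg (x - 2)]
  have c1 := candidates tau ht1 ht2 p1 q1 ha0 (bd _ hA).1 (bd _ hA').1 (bd _ hA').2
  have c2 := candidates tau ht1 ht2 p2 q2 hb0 (bd _ hB).1 (bd _ hB').1 (bd _ hB').2
  have c3 := candidates tau ht1 ht2 p3 q3 hc0 (bd _ hC).1 (bd _ hC').1 (bd _ hC').2
  clear hdet hUV hU0 hV0 hE hE' hA hB hC hA' hB' hC' ha0 hb0 hc0 bd hs hirr h5irr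
  rcases c1 with ⟨rfl, rfl⟩ | ⟨rfl, rfl⟩ | ⟨rfl, rfl⟩ | ⟨rfl, rfl⟩ | ⟨rfl, rfl⟩ <;>
  rcases c2 with ⟨rfl, rfl⟩ | ⟨rfl, rfl⟩ | ⟨rfl, rfl⟩ | ⟨rfl, rfl⟩ | ⟨rfl, rfl⟩ <;>
  rcases c3 with ⟨rfl, rfl⟩ | ⟨rfl, rfl⟩ | ⟨rfl, rfl⟩ | ⟨rfl, rfl⟩ | ⟨rfl, rfl⟩ <;>
  first
    | (exact absurd hUz (by decide))
    | (exact absurd hVz (by decide))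
    | exact ⟨by push_cast; ring, by push_cast; ring, by push_cast; ring⟩
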